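/- Let E be a Banach lattice, T a positive linear contraction on E, and n ≥ 1. Suppose F = fix(Tⁿ), equipped with the order inherited from E, is a Banach lattice. Then the restriction T|_F is a lattice isomorphism of F (bijective, with positive inverse (T|_F)^{n−1}). -/

import Mathlib

/-- If `T` is a positive linear contraction on a Banach lattice `E`, `n ≥ 1`, and
the fixed space `F = fix(Tⁿ)` (with the inherited order) is a Banach lattice (a
lattice subspace of `E`), then `T` restricts to a lattice isomorphism of `F`:
`T` maps `F` bijectively onto itself, its inverse on `F` is `T^(n-1)` (which is
positive), and `T` is an order isomorphism of `F`. -/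
theorem restriction_to_fixed_space_is_lattice_isomorphism
    {E : Type*} [NormedAddCommGroup E] [Lattice E] [IsOrderedAddMonoid E] [HasSolidNorm E] [NormedSpace ℝ E] [CompleteSpace E]
    (T : E →L[ℝ] E) (hpos : ∀ x : E, 0 ≤ x → 0 ≤ T x) (hcontr : ‖T‖ ≤ 1)
    (n : ℕ) (hn : 1 ≤ n)
    -- `F = fix(Tⁿ)` is a lattice (hence a Banach lattice) in the inherited order:
    (hlat : ∀ f : E, (T ^ n) f = f →
      ∃ m : E, IsLeast {h : E | (T ^ n) h = h ∧ f ≤ h ∧ -f ≤ h} m) :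
    -- `T` leaves `F` invariant,
    (∀ x : E, (T ^ n) x = x → (T ^ n) (T x) = T x) ∧
    -- `T` restricted to `F` is bijective,
    Set.BijOn T {x : E | (T ^ n) x = x} {x : E | (T ^ n) x = x} ∧
    -- with inverse `T^(n-1)`, which is positive,
    (∀ x : E, (T ^ n) x = x → (T ^ (n - 1)) (T x) = x ∧ T ((T ^ (n - 1)) x) = x) ∧
    (∀ x : E, 0 ≤ x → 0 ≤ (T ^ (n - 1)) x) ∧
    -- and `T` is an order isomorphism of `F` (hence a lattice isomorphism):
    (∀ x y : E, (T ^ n) x = x → (T ^ n) y = y → (T x ≤ T y ↔ x ≤ y)) := by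
  -- positivity of all powers of `T`
  have hpowpos : ∀ k : ℕ, ∀ x : E, 0 ≤ x → 0 ≤ (T ^ k) x := by
    intro k
    induction k with
    | zero => intro x hx; simpa using hx
    | succ m ih =>
      intro x hx
      have : (T ^ (m + 1)) x = (T ^ m) (T x) := by
        rw [pow_succ, ContinuousLinearMap.mul_apply]
      rw [this]
      exact ih _ (hpos x hx)
  -- commutation: `(T ^ k) (T x) = T ((T ^ k) x)`
  have hcomm : ∀ k : ℕ, ∀ x : E, (T ^ k) (T x) = T ((T ^ k) x) := by
    intro k x
    have h1 : (T ^ (k + 1)) x = (T ^ k) (T x) := by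
      rw [pow_succ, ContinuousLinearMap.mul_apply]
    have h2 : (T ^ (k + 1)) x = T ((T ^ k) x) := by
      rw [pow_succ', ContinuousLinearMap.mul_apply]
    rw [← h1, h2]
  -- `T` leaves `F` invariant
  have hinv : ∀ x : E, (T ^ n) x = x → (T ^ n) (T x) = T x := by
    intro x hx
    rw [hcomm, hx]
  obtain ⟨m, rfl⟩ : ∃ m, n = m + 1 := ⟨n - 1, (Nat.succ_pred_eq_of_pos hn).symm⟩
  have hm : (m + 1) - 1 = m := rfl
  -- the two-sided inverse property
  have hinvfun : ∀ x : E, (T ^ (m + 1)) x = x →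
      (T ^ m) (T x) = x ∧ T ((T ^ m) x) = x := by
    intro x hx
    constructor
    · rw [← ContinuousLinearMap.mul_apply, ← pow_succ]; exact hx
    · rw [← hcomm, ← ContinuousLinearMap.mul_apply, ← pow_succ]; exact hx
  have hTm_mem : ∀ x : E, (T ^ (m + 1)) x = x → (T ^ (m + 1)) ((T ^ m) x) = (T ^ m) x := by
    intro x hx
    have : (T ^ (m + 1)) ((T ^ m) x) = (T ^ m) ((T ^ (m + 1)) x) := by
      rw [← ContinuousLinearMap.mul_apply, ← ContinuousLinearMap.mul_apply, ← pow_add,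
        ← pow_add, Nat.add_comm]
    rw [this, hx]
  refine ⟨hinv, ⟨?_, ?_, ?_⟩, ?_, ?_, ?_⟩
  · intro x hx
    exact hinv x hx
  · intro x hx y hy hxy
    have h1 := (hinvfun x hx).1
    have h2 := (hinvfun y hy).1
    rw [← h1, ← h2, hxy]
  · intro y hy
    exact ⟨(T ^ m) y, hTm_mem y hy, (hinvfun y hy).2⟩
  · intro x hx
    rw [hm]
    exact hinvfun x hx
  · intro x hx
    rw [hm]
    exact hpowpos m x hx
  · intro x y hx hy
    constructor
    · intro h
      have := hpowpos m _ (sub_nonneg.mpr h)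
      rw [map_sub] at this
      have hle : (T ^ m) (T x) ≤ (T ^ m) (T y) := sub_nonneg.mp this
      rwa [(hinvfun x hx).1, (hinvfun y hy).1] at hle
    · intro h
      have := hpos _ (sub_nonneg.mpr h)
      rw [map_sub] at this
      exact sub_nonneg.mp this
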